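/- Let μ be a positive measure on ℝ₊ⁿ∖{0} with ∫ min(1, Σ_j u_j) dμ(u) < ∞, and define ψ(z) := ∫_{ℝ₊ⁿ∖{0}} (e^{z·u} − 1) dμ(u) for z ∈ ℂⁿ with Re z_j ≤ 0 for all j. Suppose θ ∈ (0, π/2) is such that for every β > 0 and every z ∈ ℂⁿ with Re z_j < 0 for all j, the complex number β − ψ(z) lies in the open sector {w ∈ ℂ : Re w > 0, |arg w| < π/2 − θ}. Then for every x ∈ [1,∞)ⁿ one has −ψ(−x) ≤ A ‖x‖^γ, where ‖x‖ := max_j x_j, A := −ψ(−1,…,−1) and γ := 1 − 2θ/π. -/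

import Mathlib

open MeasureTheory Metric

set_option maxHeartbeats 1600000 in
/-- Schwarz–Pick type bound: a holomorphic self-map of the right half plane that is
real at `1` and at `t ≥ 1` satisfies `Φ t ≤ t * Φ 1`. -/
lemma sp_half_plane {Φ : ℂ → ℂ} (hd : ∀ z : ℂ, 0 < z.re → DifferentiableAt ℂ Φ z)
    (hm : ∀ z : ℂ, 0 < z.re → 0 < (Φ z).re)
    {t P Q : ℝ} (ht : 1 < t) (hPt : Φ (t : ℂ) = (P : ℂ)) (hQ : Φ 1 = (Q : ℂ)) :
    P ≤ t * Q := by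
  have hQ0 : 0 < Q := by
    have h := hm 1 (by norm_num)
    rw [hQ] at h; simpa using h
  have hP0 : 0 < P := by
    have h := hm (t : ℂ) (by simpa using by linarith : 0 < (t : ℂ).re)
    rw [hPt] at h; simpa using h
  set b : ℝ := (Q - 1) / (Q + 1) with hbdef
  set a : ℝ := (P - 1) / (P + 1) with hadef
  set r : ℝ := (t - 1) / (t + 1) with hrdef
  have hQ1 : (0:ℝ) < Q + 1 := by linarith
  have hP1 : (0:ℝ) < P + 1 := by linarith
  have ht1 : (0:ℝ) < t + 1 := by linarith
  have hb_lt : b < 1 := by rw [hbdef, div_lt_one hQ1]; linarith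
  have hb_gt : -1 < b := by rw [hbdef, lt_div_iff₀ hQ1]; linarith
  have ha_lt : a < 1 := by rw [hadef, div_lt_one hP1]; linarith
  have ha_gt : -1 < a := by rw [hadef, lt_div_iff₀ hP1]; linarith
  have hr_lt : r < 1 := by rw [hrdef, div_lt_one ht1]; linarith
  have hr0 : 0 ≤ r := by rw [hrdef]; exact div_nonneg (by linarith) (by linarith)
  have hb2 : b ^ 2 < 1 := by nlinarith
  -- the three Möbius maps
  set D : ℂ → ℂ := fun w => (1 + w) / (1 - w) with hD
  set Cx : ℂ → ℂ := fun z => (z - 1) / (z + 1) with hCx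
  set M : ℂ → ℂ := fun w => (w - (b : ℂ)) / (1 - (b : ℂ) * w) with hM
  have key : ∀ w : ℂ, ‖w‖ < 1 → w.re ^ 2 + w.im ^ 2 < 1 := by
    intro w hw
    have h1 := Complex.sq_norm w
    rw [Complex.normSq_apply] at h1
    nlinarith [norm_nonneg w]
  have h1 : ∀ w : ℂ, ‖w‖ < 1 → (1 : ℂ) - w ≠ 0 ∧ 0 < (D w).re := by
    intro w hw
    have hs := key w hw
    have hne : (1 : ℂ) - w ≠ 0 := by
      intro h
      have : w = 1 := by linear_combination -h
      rw [this] at hs; norm_num at hs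
    refine ⟨hne, ?_⟩
    have hpos : 0 < Complex.normSq (1 - w) := Complex.normSq_pos.mpr hne
    have : (D w).re = ((1 + w.re) * (1 - w.re) + w.im * (-w.im)) / Complex.normSq (1 - w) := by
      rw [hD]
      simp [Complex.div_re, Complex.add_re, Complex.add_im, Complex.sub_re, Complex.sub_im,
        ← add_div]
    rw [this]
    exact div_pos (by nlinarith) hpos
  have h2 : ∀ z : ℂ, 0 < z.re → z + 1 ≠ 0 ∧ ‖(Cx z)‖ < 1 := by
    intro z hz
    have hne : z + 1 ≠ 0 := by
      intro h
      have : (z + 1).re = 0 := by rw [h]; simp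
      simp [Complex.add_re] at this; linarith
    refine ⟨hne, ?_⟩
    have e1 : (‖(z - 1)‖) ^ 2 = (z.re - 1) ^ 2 + z.im ^ 2 := by
      rw [Complex.sq_norm, Complex.normSq_apply]; simp [Complex.sub_re, Complex.sub_im]; ring
    have e2 : (‖(z + 1)‖) ^ 2 = (z.re + 1) ^ 2 + z.im ^ 2 := by
      rw [Complex.sq_norm, Complex.normSq_apply]; simp [Complex.add_re, Complex.add_im]; ring
    have hlt : ‖(z - 1)‖ < ‖(z + 1)‖ := by
      refine lt_of_pow_lt_pow_left₀ 2 (norm_nonneg _) ?_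
      rw [e1, e2]; nlinarith
    rw [hCx]
    simp only [norm_div]
    rw [div_lt_one (norm_pos_iff.mpr hne)]
    exact hlt
  have h3 : ∀ w : ℂ, ‖w‖ < 1 → (1 : ℂ) - (b : ℂ) * w ≠ 0 ∧ ‖(M w)‖ < 1 := by
    intro w hw
    have hs := key w hw
    have hne : (1 : ℂ) - (b : ℂ) * w ≠ 0 := by
      intro h
      have hre := congrArg Complex.re h
      have him := congrArg Complex.im h
      simp [Complex.sub_re, Complex.sub_im, Complex.mul_re, Complex.mul_im] at hre him
      nlinarith
    refine ⟨hne, ?_⟩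
    have e1 : (‖(w - (b:ℂ))‖) ^ 2 = (w.re - b) ^ 2 + w.im ^ 2 := by
      rw [Complex.sq_norm, Complex.normSq_apply]; simp [Complex.sub_re, Complex.sub_im]; ring
    have e2 : (‖(1 - (b:ℂ) * w)‖) ^ 2 = (1 - b * w.re) ^ 2 + (b * w.im) ^ 2 := by
      rw [Complex.sq_norm, Complex.normSq_apply]
      simp [Complex.sub_re, Complex.sub_im, Complex.mul_re, Complex.mul_im]; ring
    have hlt : ‖(w - (b:ℂ))‖ < ‖(1 - (b:ℂ) * w)‖ := by
      refine lt_of_pow_lt_pow_left₀ 2 (norm_nonneg _) ?_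
      rw [e1, e2]
      have hid : (1 - b * w.re) ^ 2 + (b * w.im) ^ 2 - ((w.re - b) ^ 2 + w.im ^ 2)
          = (1 - b ^ 2) * (1 - w.re ^ 2 - w.im ^ 2) := by ring
      have hp := mul_pos (by nlinarith : (0:ℝ) < 1 - b ^ 2)
        (by nlinarith : (0:ℝ) < 1 - w.re ^ 2 - w.im ^ 2)
      linarith
    rw [hM]
    simp only [norm_div]
    rw [div_lt_one (norm_pos_iff.mpr hne)]
    exact hlt
  set f : ℂ → ℂ := fun w => M (Cx (Φ (D w))) with hf
  have hmaps : Set.MapsTo f (ball (0:ℂ) 1) (ball (0:ℂ) 1) := by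
    intro w hw
    rw [mem_ball_zero_iff] at hw ⊢
    exact (h3 _ (h2 _ (hm _ (h1 w hw).2)).2).2
  have hdiff : DifferentiableOn ℂ f (ball (0:ℂ) 1) := by
    intro w hw
    rw [mem_ball_zero_iff] at hw
    apply DifferentiableAt.differentiableWithinAt
    have h1w := h1 w hw
    have hzw := hm _ h1w.2
    have h2w := h2 _ hzw
    have hDd : DifferentiableAt ℂ D w := by
      apply DifferentiableAt.div
      · fun_prop
      · fun_prop
      · exact h1w.1
    have hΦd' := hd _ h1w.2
    have hCd : DifferentiableAt ℂ Cx (Φ (D w)) := by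
      apply DifferentiableAt.div
      · fun_prop
      · fun_prop
      · exact h2w.1
    have hMd : DifferentiableAt ℂ M (Cx (Φ (D w))) := by
      apply DifferentiableAt.div
      · fun_prop
      · fun_prop
      · exact (h3 _ h2w.2).1
    exact hMd.comp w (hCd.comp w (hΦd'.comp w hDd))
  have hf0 : f 0 = 0 := by
    have hD0 : D 0 = 1 := by rw [hD]; norm_num
    have hCb : Cx (Φ 1) = (b : ℂ) := by
      rw [hQ, hCx, hbdef]; push_cast; ring
    show M (Cx (Φ (D 0))) = 0
    rw [hD0, hCb, hM]
    simp
  have hrball : ‖((r : ℂ))‖ < 1 := by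
    rw [Complex.norm_real, Real.norm_eq_abs, abs_of_nonneg hr0]; exact hr_lt
  have habs : ‖(f (r : ℂ))‖ ≤ ‖((r : ℂ))‖ :=
    Complex.norm_le_norm_of_mapsTo_ball hdiff (hmaps.mono_right ball_subset_closedBall) hf0 hrball
  -- compute f r
  have hreal : (1 : ℝ) + r = t * (1 - r) := by rw [hrdef]; field_simp; ring
  have hne1r : (1 : ℂ) - (r : ℂ) ≠ 0 := by
    rw [show (1 : ℂ) - (r:ℂ) = ((1 - r : ℝ) : ℂ) by push_cast; ring]
    exact Complex.ofReal_ne_zero.mpr (by linarith)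
  have hDr : D (r : ℂ) = (t : ℂ) := by
    rw [hD]
    rw [div_eq_iff hne1r]
    exact_mod_cast hreal
  have hCa : Cx ((P : ℝ) : ℂ) = ((a : ℝ) : ℂ) := by
    rw [hCx, hadef]; push_cast; ring
  have hMa : M ((a : ℝ) : ℂ) = (((a - b) / (1 - b * a) : ℝ) : ℂ) := by
    rw [hM]; push_cast; ring
  have hfr : f (r : ℂ) = (((a - b) / (1 - b * a) : ℝ) : ℂ) := by
    show M (Cx (Φ (D (r : ℂ)))) = _
    rw [hDr, hPt, hCa, hMa]
  have ha2 : a ^ 2 < 1 := by nlinarith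
  have h1ba : 0 < 1 - b * a := by nlinarith [sq_nonneg (a - b), sq_nonneg (a + b)]
  have habs' : |(a - b) / (1 - b * a)| ≤ r := by
    have := habs
    rw [hfr, Complex.norm_real, Complex.norm_real, Real.norm_eq_abs, Real.norm_eq_abs, abs_of_nonneg hr0] at this
    exact this
  have hkey : a - b ≤ r * (1 - b * a) := by
    rw [abs_div, abs_of_pos h1ba, div_le_iff₀ h1ba] at habs'
    have := le_abs_self (a - b)
    linarith
  have h1a : 0 < 1 - a := by linarith
  have h1b : 0 < 1 - b := by linarith
  have h1r : 0 < 1 - r := by linarith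
  have hPa : P * (1 - a) = 1 + a := by rw [hadef]; field_simp; ring
  have hQb : Q * (1 - b) = 1 + b := by rw [hbdef]; field_simp; ring
  have htr : t * (1 - r) = 1 + r := by rw [hrdef]; field_simp; ring
  have hconc : (1 + a) * ((1 - r) * (1 - b)) ≤ ((1 + r) * (1 + b)) * (1 - a) := by nlinarith [hkey]
  have e3 : P * ((1 - a) * ((1 - r) * (1 - b))) = (1 + a) * ((1 - r) * (1 - b)) := by
    rw [← hPa]; ring
  have e4 : (t * Q) * ((1 - a) * ((1 - r) * (1 - b))) = ((1 + r) * (1 + b)) * (1 - a) := by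
    rw [← htr, ← hQb]; ring
  have hprod : 0 < (1 - a) * ((1 - r) * (1 - b)) := mul_pos h1a (mul_pos h1r h1b)
  have hfin : P * ((1 - a) * ((1 - r) * (1 - b))) ≤ (t * Q) * ((1 - a) * ((1 - r) * (1 - b))) := by
    rw [e3, e4]; exact hconc
  exact le_of_mul_le_mul_right hfin hprod


/-- The positive orthant `ℝ₊ⁿ = [0,∞)ⁿ`. -/
def posOrthant (n : ℕ) : Set (Fin n → ℝ) := {u | ∀ j, 0 ≤ u j}

set_option maxHeartbeats 3000000 in
/-- Let `μ` be a positive measure on `ℝ₊ⁿ∖{0}` with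
`∫ min(1, Σ_j u_j) dμ(u) < ∞` and `ψ(z) = ∫ (e^{z·u} − 1) dμ(u)` for `Re z_j ≤ 0`.
If `θ ∈ (0, π/2)` is such that for every `β > 0` and every `z` with `Re z_j < 0` the number
`β − ψ(z)` lies in the sector `{Re w > 0, |arg w| < π/2 − θ}`, then for every
`x ∈ [1,∞)ⁿ` one has `−ψ(−x) ≤ A ‖x‖^γ` with `A = −ψ(−1,…,−1)`, `γ = 1 − 2θ/π`,
`‖x‖ = max_j x_j` (the sup-norm, since all `x_j ≥ 1`). -/
theorem psi_growth_of_sector_mapping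
    (n : ℕ) (hn : 1 ≤ n) (μ : Measure (Fin n → ℝ))
    (hμsupp : μ {u | ¬(u ∈ posOrthant n ∧ u ≠ 0)} = 0)
    (hμint : ∫⁻ u, ENNReal.ofReal (min 1 (∑ j, u j)) ∂μ < ⊤)
    (θ : ℝ) (hθ : θ ∈ Set.Ioo 0 (Real.pi / 2))
    (hsector : ∀ β : ℝ, 0 < β → ∀ z : Fin n → ℂ, (∀ j, (z j).re < 0) →
      0 < ((β : ℂ) - ∫ u, (Complex.exp (∑ j, z j * (u j : ℂ)) - 1) ∂μ).re ∧
      |((β : ℂ) - ∫ u, (Complex.exp (∑ j, z j * (u j : ℂ)) - 1) ∂μ).arg|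
        < Real.pi / 2 - θ)
    (x : Fin n → ℝ) (hx : ∀ j, 1 ≤ x j) :
    -(∫ u, (Complex.exp (∑ j, (-(x j) : ℂ) * (u j : ℂ)) - 1) ∂μ).re
      ≤ (-(∫ u, (Complex.exp (∑ j, (-1 : ℂ) * (u j : ℂ)) - 1) ∂μ).re)
          * ‖x‖ ^ (1 - 2 * θ / Real.pi) := by
  obtain ⟨hθ0, hθ2⟩ := hθ
  have hπ : 0 < Real.pi := Real.pi_pos
  set γ : ℝ := 1 - 2 * θ / Real.pi with hγdef
  have hγ0 : 0 < γ := by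
    rw [hγdef]
    have : 2 * θ / Real.pi < 1 := by rw [div_lt_one hπ]; linarith
    linarith
  have hγ1 : γ ≤ 1 := by
    rw [hγdef]
    have : 0 ≤ 2 * θ / Real.pi := by positivity
    linarith
  set p : ℝ := 1 / γ with hpdef
  have hp0 : 0 < p := by positivity
  have hγp : γ * p = 1 := by rw [hpdef]; field_simp
  set α : ℝ := Real.pi / 2 - θ with hαdef
  have hα0 : 0 < α := by rw [hαdef]; linarith
  have hpα : p * α = Real.pi / 2 := by
    rw [hpdef, hγdef, hαdef]
    have h2θ : Real.pi - 2 * θ ≠ 0 := by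
      intro h; apply absurd hθ2; push_neg; linarith
    field_simp
  clear_value γ p α
  -- notation
  set T : (Fin n → ℝ) → ℝ := fun u => ∑ j, u j with hT
  have hae : ∀ᵐ u ∂μ, u ∈ posOrthant n ∧ u ≠ 0 := ae_iff.mpr hμsupp
  have haeT : ∀ᵐ u ∂μ, 0 ≤ T u :=
    hae.mono fun u hu => Finset.sum_nonneg fun j _ => hu.1 j
  have hTcont : Continuous T := continuous_finset_sum _ fun j _ => continuous_apply j
  have hminT_int : Integrable (fun u => min 1 (T u)) μ := by
    refine ⟨(continuous_const.min hTcont).aestronglyMeasurable, ?_⟩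
    rw [hasFiniteIntegral_iff_ofReal (haeT.mono fun u hu => le_min one_pos.le hu)]
    exact hμint
  -- real integrability
  have hRint : ∀ (y : Fin n → ℝ), (∀ j, 0 ≤ y j) →
      Integrable (fun u => 1 - Real.exp (-(∑ j, y j * u j))) μ := by
    intro y hy
    set c : ℝ := ∑ j, y j with hc
    have hc0 : 0 ≤ c := Finset.sum_nonneg fun j _ => hy j
    refine Integrable.mono' (hminT_int.const_mul (max 1 c)) ?_ ?_
    · apply Continuous.aestronglyMeasurable
      have : Continuous fun u : Fin n → ℝ => ∑ j, y j * u j :=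
        continuous_finset_sum _ fun j _ => (continuous_const.mul (continuous_apply j))
      continuity
    · filter_upwards [hae] with u hu
      have hT0 : 0 ≤ T u := Finset.sum_nonneg fun j _ => hu.1 j
      set s : ℝ := ∑ j, y j * u j with hs
      have hs0 : 0 ≤ s := Finset.sum_nonneg fun j _ => mul_nonneg (hy j) (hu.1 j)
      have hexp1 : Real.exp (-s) ≤ 1 := Real.exp_le_one_iff.mpr (by linarith)
      have hexp0 : 0 < Real.exp (-s) := Real.exp_pos _
      rw [Real.norm_eq_abs, abs_of_nonneg (by linarith)]
      have hles : 1 - Real.exp (-s) ≤ s := by nlinarith [Real.add_one_le_exp (-s)]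
      have hscT : s ≤ c * T u := by
        rw [hs, hT, Finset.mul_sum]
        refine Finset.sum_le_sum fun j _ => mul_le_mul_of_nonneg_right ?_ (hu.1 j)
        rw [hc]
        exact Finset.single_le_sum (fun i _ => hy i) (Finset.mem_univ j)
      rcases le_total (T u) 1 with h | h
      · rw [min_eq_right h]
        have : c * T u ≤ max 1 c * T u :=
          mul_le_mul_of_nonneg_right (le_max_right 1 c) hT0
        linarith
      · rw [min_eq_left h]
        have : (1:ℝ) ≤ max 1 c := le_max_left 1 c
        have h2 : 1 - Real.exp (-s) ≤ 1 := by linarith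
        linarith [mul_one (max 1 c)]
  -- complex integrability
  have hCint : ∀ z : ℂ, z.re ≤ 0 →
      Integrable (fun u => Complex.exp (z * (T u : ℂ)) - 1) μ := by
    intro z hz
    refine Integrable.mono' (hminT_int.const_mul (2 * max 1 (‖z‖))) ?_ ?_
    · apply Continuous.aestronglyMeasurable
      exact (Complex.continuous_exp.comp
        (continuous_const.mul (Complex.continuous_ofReal.comp hTcont))).sub continuous_const
    · filter_upwards [haeT] with u hT0
      set s : ℝ := T u with hs
      have hre : (z * (s : ℂ)).re = z.re * s := by simp [Complex.mul_re]
      have hre0 : (z * (s : ℂ)).re ≤ 0 := by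
        rw [hre]; exact mul_nonpos_of_nonpos_of_nonneg hz hT0
      have habs : ‖(z * (s : ℂ))‖ = ‖z‖ * s := by
        rw [norm_mul, Complex.norm_real, Real.norm_eq_abs, abs_of_nonneg hT0]
      have hmax : ‖z‖ ≤ max 1 (‖z‖) := le_max_right _ _
      have hmax1 : (1:ℝ) ≤ max 1 (‖z‖) := le_max_left _ _
      rcases le_total (‖(z * (s : ℂ))‖) 1 with h | h
      · have h2 := Complex.norm_exp_sub_one_le h
        rw [habs] at h h2
        rcases le_total s 1 with h3 | h3
        · rw [min_eq_right h3]
          calc ‖(Complex.exp (z * (s:ℂ)) - 1)‖ ≤ 2 * (‖z‖ * s) := h2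
            _ ≤ 2 * max 1 (‖z‖) * s := by nlinarith
        · rw [min_eq_left h3]
          calc ‖(Complex.exp (z * (s:ℂ)) - 1)‖ ≤ 2 * (‖z‖ * s) := h2
            _ ≤ 2 * 1 := by nlinarith
            _ ≤ 2 * max 1 (‖z‖) * 1 := by nlinarith
      · have hexpabs : ‖(Complex.exp (z * (s:ℂ)))‖ ≤ 1 := by
          rw [Complex.norm_exp]; exact Real.exp_le_one_iff.mpr hre0
        have h2 : ‖(Complex.exp (z * (s:ℂ)) - 1)‖ ≤ 2 := by
          have h3 := norm_sub_le (Complex.exp (z * (s:ℂ))) 1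
          simp only [norm_one] at h3
          linarith
        rw [habs] at h
        rcases le_total s 1 with h3 | h3
        · rw [min_eq_right h3]
          nlinarith
        · rw [min_eq_left h3]
          nlinarith
  -- the one-dimensional Laplace-type transform and its holomorphy
  set F : ℂ → ℂ := fun z => ∫ u, (Complex.exp (z * (T u : ℂ)) - 1) ∂μ with hF
  have hFderiv : ∀ z : ℂ, z.re < 0 → DifferentiableAt ℂ F z := by
    intro z₀ hz₀
    set ε : ℝ := -z₀.re / 2 with hε
    have hε0 : 0 < ε := by rw [hε]; linarith
    have key := hasDerivAt_integral_of_dominated_loc_of_deriv_le (μ := μ)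
      (F := fun z u => Complex.exp (z * (T u : ℂ)) - 1)
      (F' := fun z u => (T u : ℂ) * Complex.exp (z * (T u : ℂ)))
      (x₀ := z₀) (s := ball z₀ ε)
      (bound := fun u => (1 + 1 / ε) * min 1 (T u)) (ball_mem_nhds z₀ hε0)
      ?_ ?_ ?_ ?_ ?_ ?_
    · exact key.2.differentiableAt
    · filter_upwards with z
      apply Continuous.aestronglyMeasurable
      exact (Complex.continuous_exp.comp
        (continuous_const.mul (Complex.continuous_ofReal.comp hTcont))).sub continuous_const
    · exact hCint z₀ hz₀.le
    · apply Continuous.aestronglyMeasurable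
      exact (Complex.continuous_ofReal.comp hTcont).mul (Complex.continuous_exp.comp
        (continuous_const.mul (Complex.continuous_ofReal.comp hTcont)))
    · filter_upwards [haeT] with u hT0
      intro z hball
      have hzre : z.re ≤ -ε := by
        rw [Metric.mem_ball] at hball
        have h1 : |(z - z₀).re| ≤ ‖(z - z₀)‖ := Complex.abs_re_le_norm _
        rw [Complex.dist_eq] at hball
        have h2 : |(z - z₀).re| < ε := lt_of_le_of_lt h1 hball
        rw [Complex.sub_re, abs_lt] at h2
        rw [hε] at *
        linarith [h2.2]
      have habs : ‖((T u : ℂ) * Complex.exp (z * (T u : ℂ)))‖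
          = T u * Real.exp (z.re * T u) := by
        rw [norm_mul, Complex.norm_real, Real.norm_eq_abs, abs_of_nonneg hT0, Complex.norm_exp]
        congr 2
        simp [Complex.mul_re]
      rw [habs]
      have hmono : Real.exp (z.re * T u) ≤ Real.exp (-(ε * T u)) := by
        apply Real.exp_le_exp.mpr
        nlinarith
      rcases le_total (T u) 1 with h | h
      · rw [min_eq_right h]
        have h1 : Real.exp (z.re * T u) ≤ 1 := by
          apply Real.exp_le_one_iff.mpr
          nlinarith
        nlinarith [mul_le_mul_of_nonneg_left h1 hT0, (by positivity : (0:ℝ) ≤ 1/ε)]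
      · rw [min_eq_left h]
        have h1 : ε * T u * Real.exp (-(ε * T u)) ≤ 1 := by
          have h2 := Real.add_one_le_exp (ε * T u)
          have h3 : (0:ℝ) < Real.exp (-(ε * T u)) := Real.exp_pos _
          have h4 : Real.exp (ε * T u) * Real.exp (-(ε * T u)) = 1 := by
            rw [← Real.exp_add]; simp
          nlinarith [mul_le_mul_of_nonneg_right h2 h3.le]
        have h5 : T u * Real.exp (z.re * T u) ≤ T u * Real.exp (-(ε * T u)) :=
          mul_le_mul_of_nonneg_left hmono hT0
        have h6 : T u * Real.exp (-(ε * T u)) ≤ 1 / ε := by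
          rw [le_div_iff₀ hε0]
          nlinarith [h1]
        have h7 : (0:ℝ) < 1 / ε := by positivity
        nlinarith
    · exact (hminT_int.const_mul _)
    · filter_upwards with u
      intro z hball
      have hd1 : HasDerivAt (fun z : ℂ => z * (T u : ℂ)) ((T u : ℂ)) z :=
        hasDerivAt_mul_const _
      have hd2 := hd1.cexp
      have hd3 := hd2.sub_const 1
      simpa [mul_comm] using hd3
  set G : ℝ → ℝ := fun t => ∫ u, (Real.exp (-(t * T u)) - 1) ∂μ with hG
  have hFG : ∀ t : ℝ, F (-(t : ℂ)) = ((G t : ℝ) : ℂ) := by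
    intro t
    have heq : ∀ u, Complex.exp ((-(t:ℂ)) * (T u : ℂ)) - 1
        = ((Real.exp (-(t * T u)) - 1 : ℝ) : ℂ) := by
      intro u
      rw [show (-(t:ℂ)) * (T u : ℂ) = ((-(t * T u) : ℝ) : ℂ) by push_cast; ring,
        ← Complex.ofReal_exp]
      push_cast
      ring
    show (∫ u, (Complex.exp ((-(t:ℂ)) * (T u : ℂ)) - 1) ∂μ) = _
    rw [hG]
    simp only [heq]
    exact integral_ofReal
  have hGnonpos : ∀ t : ℝ, 0 ≤ t → G t ≤ 0 := by
    intro t ht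
    apply integral_nonpos_of_ae
    filter_upwards [haeT] with u hT0
    have : Real.exp (-(t * T u)) ≤ 1 := Real.exp_le_one_iff.mpr (by nlinarith)
    simp only [Pi.zero_apply]
    linarith
  -- translation of the sector hypothesis
  have hsec : ∀ β : ℝ, 0 < β → ∀ z : ℂ, 0 < z.re →
      0 < ((β : ℂ) - F (-z)).re ∧ |((β : ℂ) - F (-z)).arg| < α := by
    intro β hβ z hz
    have heq : (∫ u, (Complex.exp (∑ j, (-z) * (u j : ℂ)) - 1) ∂μ) = F (-z) := by
      rw [hF]
      congr 1
      funext u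
      congr 2
      rw [← Finset.mul_sum]
      congr 1
      rw [hT]
      push_cast
      ring
    have h := hsector β hβ (fun _ => -z) (fun j => by simpa using hz)
    rw [heq] at h
    exact h
  -- the β-regularised growth bound
  have hbound : ∀ t : ℝ, 1 < t → ∀ β : ℝ, 0 < β →
      β + -(G t) ≤ t ^ γ * (β + -(G 1)) := by
    intro t ht β hβ
    simp only [← sub_eq_add_neg]
    set Φ : ℂ → ℂ := fun z => ((β : ℂ) - F (-z)) ^ ((p : ℝ) : ℂ) with hΦ
    have hΦd : ∀ z : ℂ, 0 < z.re → DifferentiableAt ℂ Φ z := by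
      intro z hz
      have hW : DifferentiableAt ℂ (fun z : ℂ => (β : ℂ) - F (-z)) z := by
        apply DifferentiableAt.sub (differentiableAt_const _)
        exact (hFderiv (-z) (by simpa using hz)).comp z differentiableAt_id.neg
      apply DifferentiableAt.cpow hW (differentiableAt_const _)
      rw [Complex.mem_slitPlane_iff]
      left
      exact (hsec β hβ z hz).1
    have hΦm : ∀ z : ℂ, 0 < z.re → 0 < (Φ z).re := by
      intro z hz
      obtain ⟨hre, harg⟩ := hsec β hβ z hz
      set w : ℂ := (β : ℂ) - F (-z) with hw
      have hw0 : w ≠ 0 := by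
        intro h; rw [h] at hre; simp at hre
      show 0 < ((w : ℂ) ^ ((p:ℝ):ℂ)).re
      rw [Complex.cpow_def_of_ne_zero hw0, Complex.exp_re]
      apply mul_pos (Real.exp_pos _)
      have him : (Complex.log w * ((p:ℝ):ℂ)).im = w.arg * p := by
        simp [Complex.mul_im, Complex.log_im]
      rw [him]
      apply Real.cos_pos_of_mem_Ioo
      obtain ⟨hl, hr⟩ := abs_lt.mp harg
      constructor
      · have := mul_lt_mul_of_pos_right hl hp0
        simp only [Set.mem_Ioo, neg_mul] at *
        nlinarith [hpα]
      · have := mul_lt_mul_of_pos_right hr hp0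
        nlinarith [hpα]
    have hβgt : 0 < β - G t := by have := hGnonpos t (by linarith); linarith
    have hβg1 : 0 < β - G 1 := by have := hGnonpos 1 (by norm_num); linarith
    have hvt : Φ ((t : ℝ) : ℂ) = (((β - G t) ^ p : ℝ) : ℂ) := by
      show ((β : ℂ) - F (-(t:ℂ))) ^ ((p:ℝ):ℂ) = _
      rw [hFG t, show (β:ℂ) - ((G t : ℝ) : ℂ) = (((β - G t : ℝ)) : ℂ) by push_cast; ring]
      rw [← Complex.ofReal_cpow hβgt.le p]
    have hv1 : Φ 1 = (((β - G 1) ^ p : ℝ) : ℂ) := by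
      have h1 := hFG 1
      rw [Complex.ofReal_one] at h1
      show ((β : ℂ) - F (-(1:ℂ))) ^ ((p:ℝ):ℂ) = _
      rw [h1, show (β:ℂ) - ((G 1 : ℝ) : ℂ) = (((β - G 1 : ℝ)) : ℂ) by push_cast; ring]
      rw [← Complex.ofReal_cpow hβg1.le p]
    have hsp := sp_half_plane hΦd hΦm ht hvt hv1
    have h1 : ((β - G t) ^ p) ^ γ ≤ (t * ((β - G 1) ^ p)) ^ γ :=
      Real.rpow_le_rpow (by positivity) hsp hγ0.le
    rw [← Real.rpow_mul hβgt.le, show p * γ = 1 by rw [mul_comm]; exact hγp,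
      Real.rpow_one] at h1
    rw [Real.mul_rpow (by linarith : (0:ℝ) ≤ t) (by positivity),
      ← Real.rpow_mul hβg1.le, show p * γ = 1 by rw [mul_comm]; exact hγp,
      Real.rpow_one] at h1
    exact h1
  -- growth bound
  have hg_growth : ∀ t : ℝ, 1 ≤ t → -(G t) ≤ -(G 1) * t ^ γ := by
    intro t ht
    rcases ht.eq_or_lt with h | h
    · rw [← h]; simp [Real.one_rpow]
    · apply le_of_forall_pos_le_add
      intro ε hε
      have ht0 : (0:ℝ) < t := by linarith
      have htγ : 0 < t ^ γ := Real.rpow_pos_of_pos ht0 γ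
      have hb := hbound t h (ε / t ^ γ) (by positivity)
      have hc : t ^ γ * (ε / t ^ γ) = ε := by field_simp
      have hexp : t ^ γ * (ε / t ^ γ + -(G 1)) = ε + t ^ γ * (-(G 1)) := by
        rw [mul_add, hc]
      have h2 : 0 < ε / t ^ γ := by positivity
      nlinarith [hb]
  -- identify the statement's integrals
  have hx_int_eq : (∫ u, (Complex.exp (∑ j, (-(x j) : ℂ) * (u j : ℂ)) - 1) ∂μ)
      = (((∫ u, (Real.exp (-(∑ j, x j * u j)) - 1) ∂μ : ℝ)) : ℂ) := by
    have heq : ∀ u : Fin n → ℝ, Complex.exp (∑ j, (-(x j) : ℂ) * (u j : ℂ)) - 1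
        = ((Real.exp (-(∑ j, x j * u j)) - 1 : ℝ) : ℂ) := by
      intro u
      rw [show (∑ j, (-(x j) : ℂ) * (u j : ℂ)) = ((-(∑ j, x j * u j) : ℝ) : ℂ) by
        push_cast
        simp [neg_mul, Finset.sum_neg_distrib],
        ← Complex.ofReal_exp]
      push_cast
      ring
    simp only [heq]
    exact integral_ofReal
  have h1_int_eq : (∫ u, (Complex.exp (∑ j, (-1 : ℂ) * (u j : ℂ)) - 1) ∂μ)
      = ((G 1 : ℝ) : ℂ) := by
    have heq : ∀ u : Fin n → ℝ, Complex.exp (∑ j, (-1 : ℂ) * (u j : ℂ)) - 1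
        = ((Real.exp (-(1 * T u)) - 1 : ℝ) : ℂ) := by
      intro u
      rw [show (∑ j, (-1 : ℂ) * (u j : ℂ)) = ((-(1 * T u) : ℝ) : ℂ) by
        rw [hT]
        push_cast
        simp [neg_mul, Finset.sum_neg_distrib],
        ← Complex.ofReal_exp]
      push_cast
      ring
    simp only [heq]
    rw [hG]
    exact integral_ofReal
  set N : ℝ := ‖x‖ with hN
  have hxN : ∀ j, x j ≤ N := fun j =>
    (le_abs_self _).trans (by simpa [Real.norm_eq_abs] using norm_le_pi_norm x j)
  have hN1 : 1 ≤ N := (hx ⟨0, hn⟩).trans (hxN ⟨0, hn⟩)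
  have hstep1 : -(∫ u, (Real.exp (-(∑ j, x j * u j)) - 1) ∂μ) ≤ -(G N) := by
    have hRx : Integrable (fun u => Real.exp (-(∑ j, x j * u j)) - 1) μ := by
      have h := (hRint x (fun j => le_trans zero_le_one (hx j))).neg'
      have heq : (fun u : Fin n → ℝ => -(1 - Real.exp (-(∑ j, x j * u j))))
          = (fun u : Fin n → ℝ => Real.exp (-(∑ j, x j * u j)) - 1) := by
        funext u; ring
      rwa [heq] at h
    have hRN : Integrable (fun u => Real.exp (-(N * T u)) - 1) μ := by
      have h := (hRint (fun _ => N) (fun _ => le_trans zero_le_one hN1)).neg'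
      have heq : (fun u : Fin n → ℝ => -(1 - Real.exp (-(∑ j, N * u j))))
          = (fun u : Fin n → ℝ => Real.exp (-(N * T u)) - 1) := by
        funext u; rw [hT, Finset.mul_sum]; ring
      rwa [heq] at h
    apply neg_le_neg
    show (∫ u, (Real.exp (-(N * T u)) - 1) ∂μ) ≤ _
    apply integral_mono_ae hRN hRx
    filter_upwards [hae] with u hu
    have hle : (∑ j, x j * u j) ≤ N * T u := by
      rw [hT, Finset.mul_sum]
      exact Finset.sum_le_sum fun j _ => mul_le_mul_of_nonneg_right (hxN j) (hu.1 j)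
    have := Real.exp_le_exp.mpr (neg_le_neg hle)
    linarith
  have hstep3 := hg_growth N hN1
  rw [hx_int_eq, h1_int_eq]
  rw [Complex.ofReal_re, Complex.ofReal_re]
  calc -(∫ u, (Real.exp (-(∑ j, x j * u j)) - 1) ∂μ) ≤ -(G N) := hstep1
    _ ≤ -(G 1) * N ^ γ := hstep3
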